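/- Let H be a real Hilbert space, L : H → ℝ a C¹ function with ‖DL(v)‖ ≤ C(1+‖v‖) for all v, and κ ∈ ℝ. Then the functional S(ξ, T) = T∫₀¹ (L(ξ(s)/T) + κ) ds is Gâteaux differentiable on L²([0,1], H) × (0,∞), with derivative dS(ξ,T)(η,r) = (r/T)·S(ξ,T) + T∫₀¹ DL(ξ/T)(η/T − rξ/T²) ds, and this derivative is a bounded linear functional on L²([0,1],H) × ℝ. -/

import Mathlib

open MeasureTheory Filter

/-- The free-period functional `S(ξ, T) = T ∫₀¹ (L(ξ(s)/T) + κ) ds` on paths. -/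
noncomputable def freePeriodAction {H : Type*} [NormedAddCommGroup H]
    [InnerProductSpace ℝ H] (L : H → ℝ) (κ : ℝ) (ξ : ℝ → H) (T : ℝ) : ℝ :=
  T * ∫ s in Set.Icc (0 : ℝ) 1, (L (T⁻¹ • ξ s) + κ)

set_option maxHeartbeats 1000000
theorem myIntegrableMul {α : Type*} {m : MeasurableSpace α} {μ : Measure α} {f g : α → ℝ}
    (hf : MemLp f 2 μ) (hg : MemLp g 2 μ) : Integrable (fun x => f x * g x) μ := by
  refine ((hf.integrable_sq.add hg.integrable_sq).const_mul (1/2)).mono'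
    (hf.1.mul hg.1) (ae_of_all _ fun x => ?_)
  have h1 : ‖f x * g x‖ = |f x| * |g x| := by rw [Real.norm_eq_abs, abs_mul]
  rw [h1]
  simp only [Pi.add_apply]
  nlinarith [sq_nonneg (|f x| - |g x|), sq_abs (f x), sq_abs (g x)]

theorem myLGrowth {H : Type*} [NormedAddCommGroup H] [InnerProductSpace ℝ H] [CompleteSpace H]
    (L : H → ℝ) (hL : ContDiff ℝ 1 L) (C : ℝ)
    (hgrow : ∀ v : H, ‖fderiv ℝ L v‖ ≤ C * (1 + ‖v‖)) (v : H) :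
    |L v| ≤ |L 0| + C * (1 + ‖v‖) * ‖v‖ := by
  have key : ‖L v - L (0:H)‖ ≤ C * (1 + ‖v‖) * ‖v - 0‖ := by
    refine Convex.norm_image_sub_le_of_norm_fderiv_le (𝕜 := ℝ)
      (s := Metric.closedBall (0:H) ‖v‖)
      (fun x _ => (hL.differentiable one_ne_zero) x) (fun x hx => ?_)
      (convex_closedBall (0:H) ‖v‖) (Metric.mem_closedBall_self (norm_nonneg v))
      (by simpa [Metric.mem_closedBall, dist_eq_norm] using le_refl ‖v‖)
    have hxv : ‖x‖ ≤ ‖v‖ := by simpa [Metric.mem_closedBall, dist_eq_norm] using hx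
    have hC0 : 0 ≤ C := by
      have h1 := hgrow 0
      have h0 : (0:ℝ) ≤ ‖fderiv ℝ L (0:H)‖ := norm_nonneg _
      nlinarith [norm_nonneg (0:H)]
    calc ‖fderiv ℝ L x‖ ≤ C * (1 + ‖x‖) := hgrow x
      _ ≤ C * (1 + ‖v‖) := by nlinarith
  have h2 : |L v - L 0| ≤ C * (1 + ‖v‖) * ‖v‖ := by simpa using key
  calc |L v| = |(L v - L 0) + L 0| := by ring_nf
    _ ≤ |L v - L 0| + |L 0| := abs_add_le _ _
    _ ≤ |L 0| + C * (1 + ‖v‖) * ‖v‖ := by linarith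

section Main

variable {H : Type*} [NormedAddCommGroup H] [InnerProductSpace ℝ H] [CompleteSpace H]

theorem freePeriod_key1 {H : Type*} [NormedAddCommGroup H] [InnerProductSpace ℝ H] [CompleteSpace H]
    (L : H → ℝ) (hL : ContDiff ℝ 1 L) (C : ℝ) (hC : 0 < C)
    (hgrow : ∀ v : H, ‖fderiv ℝ L v‖ ≤ C * (1 + ‖v‖)) (κ : ℝ)
    (ξ : ℝ → H) (hξ : MemLp ξ 2 (volume.restrict (Set.Icc (0 : ℝ) 1)))
    (T : ℝ) (hT : 0 < T)
    (η : ℝ → H) (hη : MemLp η 2 (volume.restrict (Set.Icc (0 : ℝ) 1))) (r : ℝ) :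
    HasDerivAt (fun δ : ℝ => (T + δ * r) *
        ∫ s in Set.Icc (0:ℝ) 1, (L ((T + δ * r)⁻¹ • (ξ s + δ • η s)) + κ))
      (r * (∫ s in Set.Icc (0:ℝ) 1, (L (T⁻¹ • ξ s) + κ)) +
        T * ∫ s in Set.Icc (0 : ℝ) 1,
          fderiv ℝ L (T⁻¹ • ξ s) (T⁻¹ • η s - (r / T ^ 2) • ξ s))
      0 := by
  set μ := volume.restrict (Set.Icc (0 : ℝ) 1) with hμ
  have hT' : T ≠ 0 := hT.ne'
  haveI : IsFiniteMeasure μ := by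
    constructor
    rw [hμ, Measure.restrict_apply_univ]
    simp [Real.volume_Icc]
  -- the ball radius
  set ε : ℝ := min 1 (T / (2 * (|r| + 1))) with hεdef
  have hε : 0 < ε := lt_min one_pos (div_pos hT (by positivity))
  have hball : ∀ δ ∈ Metric.ball (0:ℝ) ε, T / 2 ≤ T + δ * r ∧ |δ| ≤ 1 := by
    intro δ hδ
    have h1 : |δ| < ε := by simpa [Real.dist_eq] using hδ
    have h2 : |δ| < 1 := lt_of_lt_of_le h1 (min_le_left _ _)
    have h3 : |δ| < T / (2 * (|r| + 1)) := lt_of_lt_of_le h1 (min_le_right _ _)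
    have h4 : |δ * r| ≤ |δ| * (|r| + 1) := by
      rw [abs_mul]; nlinarith [abs_nonneg δ, abs_nonneg r]
    have h5 : |δ| * (|r| + 1) < T / 2 := by
      have hpos : (0:ℝ) < 2 * (|r| + 1) := by positivity
      have h3' : |δ| * (2 * (|r| + 1)) < T := (lt_div_iff₀ hpos).mp h3
      nlinarith [abs_nonneg r, abs_nonneg δ]
    have h6 : -(T/2) ≤ δ * r := by
      have := abs_le.mp (le_of_lt (lt_of_le_of_lt h4 h5))
      linarith [this.1]
    exact ⟨by linarith, le_of_lt h2⟩
  -- definitions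
  set u : ℝ → ℝ → H := fun δ s => (T + δ * r)⁻¹ • (ξ s + δ • η s) with hu
  set F : ℝ → ℝ → ℝ := fun δ s => L (u δ s) + κ with hF
  set F' : ℝ → ℝ → ℝ := fun δ s => fderiv ℝ L (u δ s)
    ((T + δ * r)⁻¹ • η s + (-((T + δ * r) ^ 2)⁻¹ * r) • (ξ s + δ • η s)) with hF'
  -- measurability
  have hwmeas : ∀ δ : ℝ, AEStronglyMeasurable (fun s => ξ s + δ • η s) μ :=
    fun δ => hξ.1.add (hη.1.const_smul δ)
  have humeas : ∀ δ : ℝ, AEStronglyMeasurable (u δ) μ :=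
    fun δ => (hwmeas δ).const_smul _
  have hFmeas : ∀ δ : ℝ, AEStronglyMeasurable (F δ) μ := fun δ =>
    (hL.continuous.comp_aestronglyMeasurable (humeas δ)).add aestronglyMeasurable_const
  have hF'meas : AEStronglyMeasurable (F' 0) μ := by
    apply (isBoundedBilinearMap_apply (𝕜 := ℝ) (E := H) (F := ℝ)).continuous.comp_aestronglyMeasurable
      (f := fun s => (fderiv ℝ L (u 0 s),
        (T + 0 * r)⁻¹ • η s + (-((T + 0 * r) ^ 2)⁻¹ * r) • (ξ s + 0 • η s)))
    exact ((hL.continuous_fderiv one_ne_zero).comp_aestronglyMeasurable (humeas 0)).prodMk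
      (((hη.1.const_smul _)).add ((hwmeas 0).const_smul _))
  -- integrability of F 0
  have hΦ : MemLp (fun s => 1 + ‖ξ s‖) 2 μ := (memLp_const (1:ℝ)).add hξ.norm
  have hint_F0 : Integrable (F 0) μ := by
    set c : ℝ := max 1 T⁻¹ with hc
    have hc1 : (1:ℝ) ≤ c := le_max_left _ _
    have hc1' : (0:ℝ) ≤ c - 1 := by linarith
    refine (hΦ.integrable_sq.const_mul (|L 0| + |κ| + C * c ^ 2)).mono'
      (hFmeas 0) (ae_of_all _ fun s => ?_)
    have h1 := myLGrowth L hL C hgrow (u 0 s)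
    have h2 : ‖u 0 s‖ ≤ c * ‖ξ s‖ := by
      have : u 0 s = T⁻¹ • ξ s := by simp [hu]
      rw [this, norm_smul, Real.norm_eq_abs, abs_of_pos (inv_pos.mpr hT)]
      have : T⁻¹ ≤ c := le_max_right _ _
      nlinarith [norm_nonneg (ξ s)]
    have h3 : (0:ℝ) ≤ ‖u 0 s‖ := norm_nonneg _
    have h4 : (0:ℝ) ≤ ‖ξ s‖ := norm_nonneg _
    have h5 : ‖F 0 s‖ ≤ |L 0| + |κ| + C * (1 + ‖u 0 s‖) * ‖u 0 s‖ := by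
      simp only [hF, Real.norm_eq_abs]
      calc |L (u 0 s) + κ| ≤ |L (u 0 s)| + |κ| := abs_add_le _ _
        _ ≤ |L 0| + |κ| + C * (1 + ‖u 0 s‖) * ‖u 0 s‖ := by linarith
    have h6' : (1 + ‖u 0 s‖) * ‖u 0 s‖ ≤ (1 + c * ‖ξ s‖) * (c * ‖ξ s‖) := by
      nlinarith [le_trans h3 h2]
    have h6 : C * ((1 + ‖u 0 s‖) * ‖u 0 s‖) ≤ C * ((1 + c * ‖ξ s‖) * (c * ‖ξ s‖)) :=
      mul_le_mul_of_nonneg_left h6' hC.le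
    have h7' : (1 + c * ‖ξ s‖) * (c * ‖ξ s‖) ≤ c ^ 2 * (1 + ‖ξ s‖) ^ 2 := by
      nlinarith [mul_nonneg h4 h4, mul_nonneg (mul_nonneg hc1' hc1') h4, sq_nonneg ‖ξ s‖,
        mul_nonneg hc1' h4]
    have h7 : C * ((1 + c * ‖ξ s‖) * (c * ‖ξ s‖)) ≤ C * (c ^ 2 * (1 + ‖ξ s‖) ^ 2) :=
      mul_le_mul_of_nonneg_left h7' hC.le
    have h8 : (1:ℝ) ≤ (1 + ‖ξ s‖) ^ 2 := by nlinarith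
    have hA : (0:ℝ) ≤ |L 0| + |κ| := by positivity
    have h9 : (|L 0| + |κ|) * 1 ≤ (|L 0| + |κ|) * (1 + ‖ξ s‖) ^ 2 :=
      mul_le_mul_of_nonneg_left h8 hA
    calc ‖F 0 s‖ ≤ |L 0| + |κ| + C * (1 + ‖u 0 s‖) * ‖u 0 s‖ := h5
      _ ≤ (|L 0| + |κ| + C * c ^ 2) * (1 + ‖ξ s‖) ^ 2 := by nlinarith [h6, h7, h9]
  -- the bound
  set M : ℝ := C * (1 + 2 / T) * (2 / T + 4 * |r| / T ^ 2) with hM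
  have hP : MemLp (fun s => 1 + (‖ξ s‖ + ‖η s‖)) 2 μ :=
    (memLp_const (1:ℝ)).add (hξ.norm.add hη.norm)
  have hbound_int : Integrable (fun s => M * (1 + (‖ξ s‖ + ‖η s‖)) ^ 2) μ :=
    hP.integrable_sq.const_mul M
  have h_bound : ∀ᵐ s ∂μ, ∀ δ ∈ Metric.ball (0:ℝ) ε,
      ‖F' δ s‖ ≤ M * (1 + (‖ξ s‖ + ‖η s‖)) ^ 2 := by
    refine ae_of_all _ fun s δ hδ => ?_
    obtain ⟨hg2, hδ1⟩ := hball δ hδ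
    set g : ℝ := T + δ * r with hgdef
    have hgpos : 0 < g := lt_of_lt_of_le (by linarith) hg2
    set N : ℝ := ‖ξ s‖ + ‖η s‖ with hN
    have hN0 : 0 ≤ N := by positivity
    have hη0 : ‖η s‖ ≤ N := by simp [hN, norm_nonneg]
    have hw : ‖ξ s + δ • η s‖ ≤ N := by
      calc ‖ξ s + δ • η s‖ ≤ ‖ξ s‖ + ‖δ • η s‖ := norm_add_le _ _
        _ ≤ N := by
            rw [norm_smul, Real.norm_eq_abs]
            nlinarith [norm_nonneg (η s)]
    have hginv : g⁻¹ ≤ 2 / T := by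
      rw [div_eq_mul_inv]
      calc g⁻¹ ≤ (T/2)⁻¹ := by
            apply inv_anti₀ (by linarith) hg2
        _ = 2 * T⁻¹ := by field_simp
    have hginv0 : 0 ≤ g⁻¹ := le_of_lt (inv_pos.mpr hgpos)
    have hg2inv : (g ^ 2)⁻¹ ≤ 4 / T ^ 2 := by
      have h1 : (T/2)^2 ≤ g^2 := by nlinarith
      calc (g^2)⁻¹ ≤ ((T/2)^2)⁻¹ := by
            apply inv_anti₀ (by positivity) h1
        _ = 4 / T^2 := by field_simp; ring
    have hg2inv0 : (0:ℝ) ≤ (g^2)⁻¹ := by positivity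
    have hu_norm : ‖u δ s‖ ≤ (2 / T) * N := by
      have : ‖u δ s‖ = g⁻¹ * ‖ξ s + δ • η s‖ := by
        rw [hu]; simp only []
        rw [norm_smul, Real.norm_eq_abs, abs_of_pos (inv_pos.mpr hgpos)]
      rw [this]
      have h2T : (0:ℝ) ≤ 2 / T := by positivity
      nlinarith [norm_nonneg (ξ s + δ • η s)]
    have hA1 : ‖fderiv ℝ L (u δ s)‖ ≤ C * (1 + 2/T) * (1 + N) := by
      calc ‖fderiv ℝ L (u δ s)‖ ≤ C * (1 + ‖u δ s‖) := hgrow _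
        _ ≤ C * (1 + 2/T) * (1 + N) := by
            have h2T : (0:ℝ) < 2 / T := by positivity
            nlinarith [norm_nonneg (u δ s)]
    have hA2 : ‖g⁻¹ • η s + (-(g ^ 2)⁻¹ * r) • (ξ s + δ • η s)‖
        ≤ (2/T + 4 * |r| / T^2) * (1 + N) := by
      calc ‖g⁻¹ • η s + (-(g ^ 2)⁻¹ * r) • (ξ s + δ • η s)‖
          ≤ ‖g⁻¹ • η s‖ + ‖(-(g ^ 2)⁻¹ * r) • (ξ s + δ • η s)‖ := norm_add_le _ _
        _ = g⁻¹ * ‖η s‖ + (g^2)⁻¹ * |r| * ‖ξ s + δ • η s‖ := by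
            rw [norm_smul, norm_smul, Real.norm_eq_abs, Real.norm_eq_abs,
              abs_of_nonneg hginv0, abs_mul, abs_neg, abs_of_nonneg hg2inv0]
        _ ≤ (2/T + 4 * |r| / T^2) * (1 + N) := by
            have hT2 : (0:ℝ) < T^2 := by positivity
            have e1 : g⁻¹ * ‖η s‖ ≤ (2/T) * (1 + N) :=
              mul_le_mul hginv (by linarith) (norm_nonneg _) (by positivity)
            have e2 : (g^2)⁻¹ * |r| ≤ (4/T^2) * |r| :=
              mul_le_mul_of_nonneg_right hg2inv (abs_nonneg r)
            have e3 : (g^2)⁻¹ * |r| * ‖ξ s + δ • η s‖ ≤ (4/T^2) * |r| * (1 + N) :=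
              mul_le_mul e2 (by linarith) (norm_nonneg _) (by positivity)
            ring_nf at e1 e3 ⊢; linarith
    calc ‖F' δ s‖ ≤ ‖fderiv ℝ L (u δ s)‖ *
          ‖g⁻¹ • η s + (-(g ^ 2)⁻¹ * r) • (ξ s + δ • η s)‖ := by
          simp only [hF']
          exact (fderiv ℝ L (u δ s)).le_opNorm _
      _ ≤ (C * (1 + 2/T) * (1 + N)) * ((2/T + 4 * |r| / T^2) * (1 + N)) := by
          apply mul_le_mul hA1 hA2 (norm_nonneg _)
          positivity
      _ = M * (1 + N) ^ 2 := by rw [hM]; ring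
  -- differentiability
  have h_diff : ∀ᵐ s ∂μ, ∀ δ ∈ Metric.ball (0:ℝ) ε, HasDerivAt (F · s) (F' δ s) δ := by
    refine ae_of_all _ fun s δ hδ => ?_
    have hgpos : 0 < T + δ * r := lt_of_lt_of_le (by linarith) (hball δ hδ).1
    have hgne : T + δ * r ≠ 0 := hgpos.ne'
    have h1 : HasDerivAt (fun δ : ℝ => T + δ * r) r δ := by
      simpa using ((hasDerivAt_id δ).mul_const r).const_add T
    have h2 : HasDerivAt (fun δ : ℝ => (T + δ * r)⁻¹) (-((T + δ * r) ^ 2)⁻¹ * r) δ := by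
      exact (hasDerivAt_inv hgne).comp δ h1
    have h3 : HasDerivAt (fun δ : ℝ => ξ s + δ • η s) (η s) δ := by
      simpa using ((hasDerivAt_id δ).smul_const (η s)).const_add (ξ s)
    have h4 := h2.smul h3
    have h5 := ((hL.differentiable one_ne_zero) (u δ s)).hasFDerivAt.comp_hasDerivAt δ h4
    exact h5.add_const κ
  have main := hasDerivAt_integral_of_dominated_loc_of_deriv_le (μ := μ) (F := F) (F' := F')
    (x₀ := (0:ℝ)) (bound := fun s => M * (1 + (‖ξ s‖ + ‖η s‖)) ^ 2) (Metric.ball_mem_nhds 0 hε)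
    (Eventually.of_forall hFmeas) hint_F0 hF'meas h_bound hbound_int h_diff
  have h1 : HasDerivAt (fun δ : ℝ => T + δ * r) r 0 := by
    simpa using ((hasDerivAt_id (0:ℝ)).mul_const r).const_add T
  have hprod := h1.mul main.2
  have hF0eq : F 0 = fun s => L (T⁻¹ • ξ s) + κ := by
    funext s; simp [hF, hu]
  have hF'0eq : F' 0 = fun s => fderiv ℝ L (T⁻¹ • ξ s) (T⁻¹ • η s - (r / T ^ 2) • ξ s) := by
    funext s
    simp only [hF', hu, zero_mul, add_zero, zero_smul]
    congr 1
    rw [sub_eq_add_neg, ← neg_smul]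
    congr 1
    ring
  rw [hF0eq, hF'0eq] at hprod
  exact hprod.congr_deriv (by simp)

end Main

theorem freePeriod_key2 {H : Type*} [NormedAddCommGroup H] [InnerProductSpace ℝ H] [CompleteSpace H]
    (L : H → ℝ) (hL : ContDiff ℝ 1 L) (C : ℝ) (hC : 0 < C)
    (hgrow : ∀ v : H, ‖fderiv ℝ L v‖ ≤ C * (1 + ‖v‖)) (κ : ℝ)
    (ξ : ℝ → H) (hξ : MemLp ξ 2 (volume.restrict (Set.Icc (0 : ℝ) 1)))
    (T : ℝ) (hT : 0 < T) :
    ∃ K : ℝ, ∀ (η : ℝ → H), MemLp η 2 (volume.restrict (Set.Icc (0 : ℝ) 1)) → ∀ r : ℝ,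
      |(r / T) * freePeriodAction L κ ξ T +
          T * ∫ s in Set.Icc (0 : ℝ) 1,
            fderiv ℝ L (T⁻¹ • ξ s) (T⁻¹ • η s - (r / T ^ 2) • ξ s)| ≤
        K * (Real.sqrt (∫ s in Set.Icc (0 : ℝ) 1, ‖η s‖ ^ 2) + |r|) := by
  set μ := volume.restrict (Set.Icc (0 : ℝ) 1) with hμ
  have hT' : T ≠ 0 := hT.ne'
  have hTinv : (0:ℝ) ≤ T⁻¹ := (inv_pos.mpr hT).le
  haveI : IsFiniteMeasure μ := by
    constructor
    rw [hμ, Measure.restrict_apply_univ]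
    simp [Real.volume_Icc]
  set φ : ℝ → ℝ := fun s => C * (1 + T⁻¹ * ‖ξ s‖) with hφ
  have hφmem : MemLp φ 2 μ := ((memLp_const (1:ℝ)).add (hξ.norm.const_mul T⁻¹)).const_mul C
  have hφ0 : ∀ s, 0 ≤ φ s := fun s =>
    mul_nonneg hC.le (add_nonneg zero_le_one (mul_nonneg hTinv (norm_nonneg _)))
  set K1 : ℝ := Real.sqrt (∫ s, φ s ^ 2 ∂μ) with hK1
  set K2 : ℝ := ∫ s, φ s * ‖ξ s‖ ∂μ with hK2
  have hK10 : 0 ≤ K1 := Real.sqrt_nonneg _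
  have hK20 : 0 ≤ K2 := integral_nonneg fun s => mul_nonneg (hφ0 s) (norm_nonneg _)
  set S : ℝ := freePeriodAction L κ ξ T with hS
  refine ⟨max K1 (|S| / T + K2 / T), fun η hη r => ?_⟩
  set Q : ℝ := Real.sqrt (∫ s, ‖η s‖ ^ 2 ∂μ) with hQ
  have hQ0 : 0 ≤ Q := Real.sqrt_nonneg _
  -- Cauchy-Schwarz
  have hpq : (2:ℝ).HolderConjugate 2 := Real.HolderConjugate.two_two
  have h2eq : ENNReal.ofReal (2:ℝ) = 2 := by norm_num
  have hφ2 : MemLp φ (ENNReal.ofReal (2:ℝ)) μ := by rw [h2eq]; exact hφmem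
  have hη2 : MemLp (fun s => ‖η s‖) (ENNReal.ofReal (2:ℝ)) μ := by rw [h2eq]; exact hη.norm
  have hCS := integral_mul_le_Lp_mul_Lq_of_nonneg hpq (ae_of_all _ hφ0)
    (ae_of_all _ fun s => norm_nonneg (η s)) hφ2 hη2
  simp only [Real.rpow_two] at hCS
  rw [← Real.sqrt_eq_rpow, ← Real.sqrt_eq_rpow] at hCS
  -- pointwise bound
  have hptw : ∀ s, ‖fderiv ℝ L (T⁻¹ • ξ s) (T⁻¹ • η s - (r / T ^ 2) • ξ s)‖ ≤
      φ s * (T⁻¹ * ‖η s‖ + (|r| / T ^ 2) * ‖ξ s‖) := by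
    intro s
    have e1 : ‖fderiv ℝ L (T⁻¹ • ξ s)‖ ≤ φ s := by
      calc ‖fderiv ℝ L (T⁻¹ • ξ s)‖ ≤ C * (1 + ‖T⁻¹ • ξ s‖) := hgrow _
        _ = φ s := by
            rw [hφ, norm_smul, Real.norm_eq_abs, abs_of_pos (inv_pos.mpr hT)]
    have e2 : ‖T⁻¹ • η s - (r / T ^ 2) • ξ s‖ ≤ T⁻¹ * ‖η s‖ + (|r| / T ^ 2) * ‖ξ s‖ := by
      calc ‖T⁻¹ • η s - (r / T ^ 2) • ξ s‖
          ≤ ‖T⁻¹ • η s‖ + ‖(r / T ^ 2) • ξ s‖ := norm_sub_le _ _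
        _ = T⁻¹ * ‖η s‖ + (|r| / T ^ 2) * ‖ξ s‖ := by
            rw [norm_smul, norm_smul, Real.norm_eq_abs, Real.norm_eq_abs,
              abs_of_pos (inv_pos.mpr hT), abs_div, abs_of_pos (by positivity : (0:ℝ) < T ^ 2)]
    calc ‖fderiv ℝ L (T⁻¹ • ξ s) (T⁻¹ • η s - (r / T ^ 2) • ξ s)‖
        ≤ ‖fderiv ℝ L (T⁻¹ • ξ s)‖ * ‖T⁻¹ • η s - (r / T ^ 2) • ξ s‖ :=
          (fderiv ℝ L (T⁻¹ • ξ s)).le_opNorm _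
      _ ≤ φ s * (T⁻¹ * ‖η s‖ + (|r| / T ^ 2) * ‖ξ s‖) :=
          mul_le_mul e1 e2 (norm_nonneg _) (hφ0 s)
  have hg_int : Integrable (fun s => φ s * (T⁻¹ * ‖η s‖ + (|r| / T ^ 2) * ‖ξ s‖)) μ :=
    myIntegrableMul hφmem ((hη.norm.const_mul T⁻¹).add (hξ.norm.const_mul (|r| / T ^ 2)))
  have hnormint : ‖∫ s, fderiv ℝ L (T⁻¹ • ξ s) (T⁻¹ • η s - (r / T ^ 2) • ξ s) ∂μ‖ ≤
      ∫ s, φ s * (T⁻¹ * ‖η s‖ + (|r| / T ^ 2) * ‖ξ s‖) ∂μ :=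
    norm_integral_le_of_norm_le hg_int (ae_of_all _ hptw)
  set X : ℝ := ∫ s, φ s * ‖η s‖ ∂μ with hX
  have hsplit : ∫ s, φ s * (T⁻¹ * ‖η s‖ + (|r| / T ^ 2) * ‖ξ s‖) ∂μ
      = T⁻¹ * X + (|r| / T ^ 2) * K2 := by
    have heq : (fun s => φ s * (T⁻¹ * ‖η s‖ + (|r| / T ^ 2) * ‖ξ s‖))
        = fun s => T⁻¹ * (φ s * ‖η s‖) + (|r| / T ^ 2) * (φ s * ‖ξ s‖) := by
      funext s; ring
    rw [heq, integral_add ((myIntegrableMul hφmem hη.norm).const_mul _)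
      ((myIntegrableMul hφmem hξ.norm).const_mul _), integral_const_mul, integral_const_mul]
  set I : ℝ := ∫ s, fderiv ℝ L (T⁻¹ • ξ s) (T⁻¹ • η s - (r / T ^ 2) • ξ s) ∂μ with hI
  have hIabs : |I| ≤ T⁻¹ * X + (|r| / T ^ 2) * K2 := by
    rw [← Real.norm_eq_abs, ← hsplit]; exact hnormint
  have hTI : |T * I| ≤ X + |r| * K2 / T := by
    rw [abs_mul, abs_of_pos hT]
    calc T * |I| ≤ T * (T⁻¹ * X + (|r| / T ^ 2) * K2) :=
          mul_le_mul_of_nonneg_left hIabs hT.le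
      _ = X + |r| * K2 / T := by field_simp
  have hrS : |r / T * S| = |r| * |S| / T := by
    rw [abs_mul, abs_div, abs_of_pos hT]; ring
  have hXQ : X ≤ K1 * Q := hCS
  have hK1le : K1 ≤ max K1 (|S| / T + K2 / T) := le_max_left _ _
  have hc2le : |S| / T + K2 / T ≤ max K1 (|S| / T + K2 / T) := le_max_right _ _
  have hm1 : K1 * Q ≤ max K1 (|S| / T + K2 / T) * Q := mul_le_mul_of_nonneg_right hK1le hQ0
  have hm2 : (|S| / T + K2 / T) * |r| ≤ max K1 (|S| / T + K2 / T) * |r| :=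
    mul_le_mul_of_nonneg_right hc2le (abs_nonneg r)
  calc |r / T * S + T * I| ≤ |r / T * S| + |T * I| := abs_add_le _ _
    _ ≤ |r| * |S| / T + (X + |r| * K2 / T) := by rw [hrS]; linarith
    _ ≤ max K1 (|S| / T + K2 / T) * (Q + |r|) := by
        ring_nf at hm1 hm2 hXQ ⊢
        linarith


/-- Gâteaux differentiability of the free-period action functional
`S(ξ,T) = T∫₀¹(L(ξ(s)/T) + κ)ds` on `L²([0,1],H) × (0,∞)` for a C¹ Lagrangian with
linearly growing derivative; the derivative is
`dS(ξ,T)(η,r) = (r/T)S(ξ,T) + T∫₀¹ DL(ξ/T)(η/T − rξ/T²) ds` and is a bounded linear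
functional on `L²([0,1],H) × ℝ`. -/
theorem stmt_14 {H : Type*} [NormedAddCommGroup H] [InnerProductSpace ℝ H] [CompleteSpace H]
    (L : H → ℝ) (hL : ContDiff ℝ 1 L) (C : ℝ) (hC : 0 < C)
    (hgrow : ∀ v : H, ‖fderiv ℝ L v‖ ≤ C * (1 + ‖v‖)) (κ : ℝ)
    (ξ : ℝ → H) (hξ : MemLp ξ 2 (volume.restrict (Set.Icc (0 : ℝ) 1)))
    (T : ℝ) (hT : 0 < T) :
    (∀ (η : ℝ → H), MemLp η 2 (volume.restrict (Set.Icc (0 : ℝ) 1)) → ∀ r : ℝ,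
      HasDerivAt (fun δ : ℝ => freePeriodAction L κ (fun s => ξ s + δ • η s) (T + δ * r))
        ((r / T) * freePeriodAction L κ ξ T +
          T * ∫ s in Set.Icc (0 : ℝ) 1,
            fderiv ℝ L (T⁻¹ • ξ s) (T⁻¹ • η s - (r / T ^ 2) • ξ s))
        0) ∧
    ∃ K : ℝ, ∀ (η : ℝ → H), MemLp η 2 (volume.restrict (Set.Icc (0 : ℝ) 1)) → ∀ r : ℝ,
      |(r / T) * freePeriodAction L κ ξ T +
          T * ∫ s in Set.Icc (0 : ℝ) 1,
            fderiv ℝ L (T⁻¹ • ξ s) (T⁻¹ • η s - (r / T ^ 2) • ξ s)| ≤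
        K * (Real.sqrt (∫ s in Set.Icc (0 : ℝ) 1, ‖η s‖ ^ 2) + |r|) := by
  constructor
  · intro η hη r
    have key := freePeriod_key1 L hL C hC hgrow κ ξ hξ T hT η hη r
    have heq : (r / T) * freePeriodAction L κ ξ T
        = r * ∫ s in Set.Icc (0:ℝ) 1, (L (T⁻¹ • ξ s) + κ) := by
      simp only [freePeriodAction]
      field_simp
    rw [heq]
    exact key
  · exact freePeriod_key2 L hL C hC hgrow κ ξ hξ T hT
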